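/- Let G be a group, M a G-set, and z ∈ P(P(M)) an element whose stabilizer under the G-action on P(P(M)) equals the kernel G_M = {g ∈ G : ∀ m ∈ M, g • m = m}. Let H be a subgroup of G with G_M ⊆ H. Then the stabilizer of the element H • z := {h • z : h ∈ H} of P(P(P(M))) equals H. -/
import Mathlib


open Pointwise

theorem stabilizer_of_orbit_of_kernel_stabilized_point
    {G : Type*} [Group G] (M : Type*) [MulAction G M]
    (z : Set (Set M))
    (hz : {g : G | g • z = z} = {g : G | ∀ m : M, g • m = m})
    (H : Subgroup G)
    (hH : {g : G | ∀ m : M, g • m = m} ⊆ (H : Set G)) :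
    {g : G | g • ((fun h : G => h • z) '' (H : Set G)) = (fun h : G => h • z) '' (H : Set G)} =
      (H : Set G) := by
  ext g
  simp only [Set.mem_setOf_eq, SetLike.mem_coe]
  constructor
  · intro hg
    have hz1 : z ∈ (fun h : G => h • z) '' (H : Set G) :=
      ⟨1, H.one_mem, one_smul _ _⟩
    have hmem : g • z ∈ g • ((fun h : G => h • z) '' (H : Set G)) :=
      Set.smul_mem_smul_set hz1
    rw [hg] at hmem
    obtain ⟨h, hh, hhz⟩ := hmem
    have hk : h⁻¹ * g ∈ {g : G | g • z = z} := by
      show (h⁻¹ * g) • z = z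
      rw [mul_smul, ← hhz, ← mul_smul, inv_mul_cancel, one_smul]
    have : h⁻¹ * g ∈ H := hH (hz ▸ hk)
    have := H.mul_mem hh this
    rwa [mul_inv_cancel_left] at this
  · intro hg
    ext w
    constructor
    · rintro ⟨-, ⟨h, hh, rfl⟩, rfl⟩
      exact ⟨g * h, H.mul_mem hg hh, mul_smul g h z⟩
    · rintro ⟨h, hh, rfl⟩
      exact ⟨g⁻¹ • h • z, ⟨g⁻¹ * h, H.mul_mem (H.inv_mem hg) hh, mul_smul _ _ _⟩,
        smul_inv_smul g _⟩
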